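/- Let R be a valuation ring, A a commutative ring, f ∈ A a nonzerodivisor such that A/fA is R-torsion-free, and M a finitely generated A-module. Then the dual module M^∨ = Hom_A(M, A) satisfies: (i) multiplication by f on M^∨ is injective; (ii) M^∨ is R-torsion-free; (iii) M^∨/f M^∨ is R-torsion-free. -/

import Mathlib

/-- Let `R` be a valuation ring, `A` an `R`-torsion-free `R`-algebra,
`f ∈ A` a nonzerodivisor such that `A/fA` is `R`-torsion-free, and `M` a finitely generated
`A`-module.  Then the dual `M^∨ = Hom_A(M, A)` satisfies: (i) multiplication by `f` on `M^∨`
is injective; (ii) `M^∨` is `R`-torsion-free; (iii) `M^∨/f·M^∨` is `R`-torsion-free. -/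
theorem stmt8 (R : Type*) [CommRing R] [IsDomain R] [ValuationRing R]
    (A : Type*) [CommRing A] [Algebra R A] [NoZeroSMulDivisors R A]
    (f : A) (hf : f ∈ nonZeroDivisors A)
    (hAf : ∀ (r : R) (a : A), r ≠ 0 → (∃ b : A, r • a = f * b) → ∃ c : A, a = f * c)
    (M : Type*) [AddCommGroup M] [Module A M] [Module.Finite A M] :
    (∀ φ : Module.Dual A M, f • φ = 0 → φ = 0) ∧
    (∀ (r : R) (φ : Module.Dual A M), r ≠ 0 → algebraMap R A r • φ = 0 → φ = 0) ∧
    (∀ (r : R) (φ : Module.Dual A M), r ≠ 0 →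
      (∃ ψ : Module.Dual A M, algebraMap R A r • φ = f • ψ) →
      ∃ ψ' : Module.Dual A M, φ = f • ψ') := by
  have hfz : ∀ a : A, f * a = 0 → a = 0 := fun a h =>
    hf.2 a (by rw [mul_comm]; exact h)
  have hfc : ∀ a b : A, f * a = f * b → a = b := by
    intro a b h
    have h2 : f * (a - b) = 0 := by rw [mul_sub, h, sub_self]
    exact sub_eq_zero.mp (hfz _ h2)
  refine ⟨?_, ?_, ?_⟩
  · intro φ h
    ext m
    have := LinearMap.congr_fun h m
    simp only [LinearMap.smul_apply, smul_eq_mul, LinearMap.zero_apply] at this ⊢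
    exact hfz _ this
  · intro r φ hr h
    ext m
    have := LinearMap.congr_fun h m
    simp only [LinearMap.smul_apply, smul_eq_mul, LinearMap.zero_apply] at this ⊢
    have h2 : r • φ m = 0 := by rw [Algebra.smul_def, this]
    exact (smul_eq_zero.mp h2).resolve_left hr
  · rintro r φ hr ⟨ψ, h⟩
    have key : ∀ m, ∃ c, φ m = f * c := by
      intro m
      refine hAf r (φ m) hr ⟨ψ m, ?_⟩
      have := LinearMap.congr_fun h m
      simpa [Algebra.smul_def] using this
    choose c hc using key
    refine ⟨{ toFun := c, map_add' := ?_, map_smul' := ?_ }, ?_⟩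
    · intro x y
      apply hfc
      rw [← hc, map_add, hc, hc, mul_add]
    · intro a x
      apply hfc
      simp only [RingHom.id_apply, smul_eq_mul]
      rw [← hc, map_smul, smul_eq_mul, hc]
      ring
    · ext m
      simp only [LinearMap.smul_apply, smul_eq_mul, LinearMap.coe_mk, AddHom.coe_mk]
      exact hc m
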